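/- arXiv:1207.6754 — 6 statements merged into one kernel-verified Lean document; each statement's English description precedes it below -/
import Mathlib

section
/- Let X be a finite set with n ≥ 2 elements. For any probability measure σ on X × X with σ(diagonal) = 0, there exists a subset E ⊆ X such that σ(E × (X \ E)) > 1/4. -/
set_option linter.unusedSectionVars false

open MeasureTheory MeasurableSpace Set

section Atoms
variable {X : Type*} [Fintype X] [MeasurableSpace X]

/-- The atom of the σ-algebra containing `x`. -/
def matom (x : X) : Set X := ⋂₀ {S : Set X | MeasurableSet S ∧ x ∈ S}

lemma matom_measurable (x : X) : MeasurableSet (matom x) :=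
  MeasurableSet.sInter (Set.toFinite _).countable (fun _ h => h.1)

lemma mem_matom_self (x : X) : x ∈ matom x := fun _ h => h.2

lemma matom_subset {x : X} {S : Set X} (hS : MeasurableSet S) (hx : x ∈ S) :
    matom x ⊆ S := sInter_subset_of_mem ⟨hS, hx⟩

lemma matom_eq_of_mem {x y : X} (h : y ∈ matom x) : matom y = matom x := by
  apply subset_antisymm
  · intro z hz S hS
    exact hz S ⟨hS.1, matom_subset hS.1 hS.2 h⟩
  · intro z hz S hS
    have hxS : x ∈ S := by
      by_contra hx
      exact (h Sᶜ ⟨hS.1.compl, hx⟩) hS.2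
    exact hz S ⟨hS.1, hxS⟩

/-- every measurable set of the product is a union of products of atoms -/
lemma matom_prod_subset {W : Set (X × X)} (hW : MeasurableSet W) {a b : X}
    (hab : (a, b) ∈ W) : matom a ×ˢ matom b ⊆ W := by
  have hW' : MeasurableSet[generateFrom
      (image2 (· ×ˢ ·) { s : Set X | MeasurableSet s } { t : Set X | MeasurableSet t })] W := by
    rw [generateFrom_prod]; exact hW
  clear hW
  revert a b
  induction W, hW' using generateFrom_induction with
  | hC t ht _ =>
    rintro a b hab
    obtain ⟨s, hs, t', ht', rfl⟩ := ht
    rintro ⟨u, v⟩ ⟨hu, hv⟩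
    exact ⟨matom_subset hs hab.1 hu, matom_subset ht' hab.2 hv⟩
  | empty => intro a b hab; exact absurd hab (notMem_empty _)
  | compl t ht ih =>
    intro a b hab
    rintro ⟨u, v⟩ ⟨hu, hv⟩ huv
    have : matom u ×ˢ matom v ⊆ t := ih huv
    exact hab (this ⟨(matom_eq_of_mem hu) ▸ mem_matom_self a,
      (matom_eq_of_mem hv) ▸ mem_matom_self b⟩)
  | iUnion s hs ih =>
    intro a b hab
    obtain ⟨i, hi⟩ := mem_iUnion.1 hab
    exact subset_iUnion_of_subset i (ih i hi)

end Atoms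

lemma count_powerset {α : Type*} [DecidableEq α] {s : Finset α} {a b : α}
    (ha : a ∈ s) (hb : b ∈ s) (hab : a ≠ b) :
    ((s.powerset.filter (fun T => a ∈ T ∧ b ∉ T)).card) = 2 ^ (s.card - 2) := by
  have key : (s.powerset.filter (fun T => a ∈ T ∧ b ∉ T)).card
      = ((s.erase a).erase b).powerset.card := by
    refine Finset.card_bij' (fun T _ => T.erase a) (fun S _ => insert a S)
      ?_ ?_ ?_ ?_
    · intro T hT
      simp only [Finset.mem_filter, Finset.mem_powerset] at hT ⊢
      intro x hx
      rw [Finset.mem_erase] at hx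
      exact Finset.mem_erase.2 ⟨fun h => hT.2.2 (h ▸ hx.2), Finset.mem_erase.2
        ⟨hx.1, hT.1 hx.2⟩⟩
    · intro S hS
      simp only [Finset.mem_powerset] at hS
      simp only [Finset.mem_filter, Finset.mem_powerset]
      refine ⟨?_, Finset.mem_insert_self _ _, ?_⟩
      · intro x hx
        rcases Finset.mem_insert.1 hx with rfl | hx
        · exact ha
        · exact Finset.mem_of_mem_erase (Finset.mem_of_mem_erase (hS hx))
      · intro hbmem
        rcases Finset.mem_insert.1 hbmem with h | h
        · exact hab h.symm
        · have := hS h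
          simp [Finset.mem_erase] at this
    · intro T hT
      simp only [Finset.mem_filter] at hT
      exact Finset.insert_erase hT.2.1
    · intro S hS
      simp only [Finset.mem_powerset] at hS
      apply Finset.erase_insert
      intro haS
      have := hS haS
      simp [Finset.mem_erase] at this
  rw [key, Finset.card_powerset, Finset.card_erase_of_mem, Finset.card_erase_of_mem ha]
  · congr 1
  · exact Finset.mem_erase.2 ⟨fun h => hab h.symm, hb⟩
theorem stmt0 {X : Type*} [Fintype X] [MeasurableSpace X]
    (hn : 2 ≤ Fintype.card X)
    (σ : Measure (X × X)) [IsProbabilityMeasure σ]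
    (hdiag : σ {p : X × X | p.1 = p.2} = 0) :
    ∃ E : Set X, σ (E ×ˢ Eᶜ) > 1 / 4 := by
  classical
  by_contra hcon
  push_neg at hcon
  obtain ⟨N, hdN, hNm, hN0⟩ := exists_measurable_superset_of_null hdiag
  have hzero : ∀ x : X, σ (matom x ×ˢ matom x) = 0 := fun x =>
    measure_mono_null (matom_prod_subset hNm (hdN (show (x, x) ∈ {p : X × X | p.1 = p.2} from rfl))) hN0
  set 𝒜 : Finset (Set X) := Finset.univ.image matom with h𝒜def
  have hmem : ∀ x : X, matom x ∈ 𝒜 := fun x => Finset.mem_image_of_mem _ (Finset.mem_univ x)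
  have hrep : ∀ P ∈ 𝒜, ∃ x, matom x = P := by
    intro P hP
    simpa [h𝒜def] using hP
  have hmeasP : ∀ P ∈ 𝒜, MeasurableSet P := by
    intro P hP; obtain ⟨x, rfl⟩ := hrep P hP; exact matom_measurable x
  have hPP : ∀ P ∈ 𝒜, σ (P ×ˢ P) = 0 := by
    intro P hP; obtain ⟨x, rfl⟩ := hrep P hP; exact hzero x
  have hdisj : ∀ P ∈ 𝒜, ∀ Q ∈ 𝒜, P ≠ Q → Disjoint P Q := by
    intro P hP Q hQ hne
    obtain ⟨x, rfl⟩ := hrep P hP; obtain ⟨y, rfl⟩ := hrep Q hQ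
    rw [Set.disjoint_left]
    intro z hzP hzQ
    exact hne ((matom_eq_of_mem hzP).symm.trans (matom_eq_of_mem hzQ))
  have hmemU : ∀ (T : Finset (Set X)), T ⊆ 𝒜 → ∀ x : X, (x ∈ ⋃ P ∈ T, P ↔ matom x ∈ T) := by
    intro T hT x
    constructor
    · intro hx
      obtain ⟨P, hP, hxP⟩ := Set.mem_iUnion₂.1 hx
      obtain ⟨y, rfl⟩ := hrep P (hT hP)
      rwa [matom_eq_of_mem hxP]
    · intro h
      exact Set.mem_biUnion h (mem_matom_self x)
  have hadd : ∀ (T S : Finset (Set X)), T ⊆ 𝒜 → S ⊆ 𝒜 →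
      σ ((⋃ P ∈ T, P) ×ˢ (⋃ Q ∈ S, Q)) = ∑ P ∈ T, ∑ Q ∈ S, σ (P ×ˢ Q) := by
    intro T S hT hS
    have hUS : MeasurableSet (⋃ Q ∈ S, Q) :=
      S.measurableSet_biUnion (fun Q hQ => hmeasP Q (hS hQ))
    have h1 : (⋃ P ∈ T, P) ×ˢ (⋃ Q ∈ S, Q) = ⋃ P ∈ T, P ×ˢ (⋃ Q ∈ S, Q) := by
      rw [Set.iUnion_prod_const]
      exact Set.iUnion_congr fun P => Set.iUnion_prod_const.symm ▸ rfl
    rw [h1, measure_biUnion_finset ?_ ?_]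
    · apply Finset.sum_congr rfl
      intro P hP
      have h2 : P ×ˢ (⋃ Q ∈ S, Q) = ⋃ Q ∈ S, P ×ˢ Q := by
        rw [Set.prod_iUnion]
        exact Set.iUnion_congr fun Q => Set.prod_iUnion.symm ▸ rfl
      rw [h2, measure_biUnion_finset ?_ ?_]
      · intro Q hQ Q' hQ' hne
        show Disjoint (P ×ˢ Q) (P ×ˢ Q')
        apply Set.Disjoint.set_prod_right (hdisj Q (hS hQ) Q' (hS hQ') hne) _ _
      · exact fun Q hQ => (hmeasP P (hT hP)).prod (hmeasP Q (hS hQ))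
    · intro P hP P' hP' hne
      show Disjoint (P ×ˢ ⋃ Q ∈ S, Q) (P' ×ˢ ⋃ Q ∈ S, Q)
      apply Set.Disjoint.set_prod_left (hdisj P (hT hP) P' (hT hP') hne)
    · exact fun P hP => (hmeasP P (hT hP)).prod hUS
  have hU𝒜 : (⋃ P ∈ 𝒜, P) = Set.univ := by
    ext x
    simp only [Set.mem_univ, iff_true]
    exact Set.mem_biUnion (hmem x) (mem_matom_self x)
  have htotal : ∑ P ∈ 𝒜, ∑ Q ∈ 𝒜, σ (P ×ˢ Q) = 1 := by
    rw [← hadd 𝒜 𝒜 le_rfl le_rfl, hU𝒜, Set.univ_prod_univ, measure_univ]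
  have hk2 : 2 ≤ 𝒜.card := by
    by_contra hlt
    push_neg at hlt
    have hone : ∀ P ∈ 𝒜, ∀ Q ∈ 𝒜, P = Q := Finset.card_le_one.1 (by omega)
    have hz : ∑ P ∈ 𝒜, ∑ Q ∈ 𝒜, σ (P ×ˢ Q) = 0 := by
      apply Finset.sum_eq_zero; intro P hP
      apply Finset.sum_eq_zero; intro Q hQ
      have h := hPP Q hQ
      rw [hone P hP Q hQ]
      exact h
    rw [hz] at htotal
    exact one_ne_zero htotal.symm
  have hcompl : ∀ T ⊆ 𝒜, (⋃ P ∈ T, P)ᶜ = ⋃ Q ∈ 𝒜 \ T, Q := by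
    intro T hT
    ext x
    rw [Set.mem_compl_iff, hmemU T hT x, hmemU (𝒜 \ T) Finset.sdiff_subset x,
      Finset.mem_sdiff]
    exact ⟨fun h => ⟨hmem x, h⟩, fun h => h.2⟩
  have hsum : ∑ T ∈ 𝒜.powerset, σ ((⋃ P ∈ T, P) ×ˢ (⋃ P ∈ T, P)ᶜ)
      = 2 ^ (𝒜.card - 2) := by
    have step1 : ∀ T ∈ 𝒜.powerset, σ ((⋃ P ∈ T, P) ×ˢ (⋃ P ∈ T, P)ᶜ)
        = ∑ P ∈ 𝒜, ∑ Q ∈ 𝒜, if P ∈ T ∧ Q ∉ T then σ (P ×ˢ Q) else 0 := by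
      intro T hT
      rw [Finset.mem_powerset] at hT
      rw [hcompl T hT, hadd T (𝒜 \ T) hT Finset.sdiff_subset]
      have inner : ∀ P, ∑ Q ∈ 𝒜 \ T, σ (P ×ˢ Q)
          = ∑ Q ∈ 𝒜, if Q ∉ T then σ (P ×ˢ Q) else 0 := by
        intro P
        rw [Finset.sdiff_eq_filter, Finset.sum_filter]
      calc ∑ P ∈ T, ∑ Q ∈ 𝒜 \ T, σ (P ×ˢ Q)
          = ∑ P ∈ 𝒜 ∩ T, ∑ Q ∈ 𝒜 \ T, σ (P ×ˢ Q) := by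
            rw [Finset.inter_eq_right.2 hT]
        _ = ∑ P ∈ 𝒜, if P ∈ T then ∑ Q ∈ 𝒜 \ T, σ (P ×ˢ Q) else 0 := by
            rw [Finset.sum_ite_mem]
        _ = ∑ P ∈ 𝒜, ∑ Q ∈ 𝒜, if P ∈ T ∧ Q ∉ T then σ (P ×ˢ Q) else 0 := by
            apply Finset.sum_congr rfl
            intro P hP
            split_ifs with h
            · rw [inner P]
              apply Finset.sum_congr rfl
              intro Q hQ
              simp [h]
            · symm
              apply Finset.sum_eq_zero
              intro Q hQ
              simp [h]
    rw [Finset.sum_congr rfl step1, Finset.sum_comm]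
    have swap2 : ∀ P ∈ 𝒜, (∑ T ∈ 𝒜.powerset, ∑ Q ∈ 𝒜,
          if P ∈ T ∧ Q ∉ T then σ (P ×ˢ Q) else 0)
        = ∑ Q ∈ 𝒜, 2 ^ (𝒜.card - 2) * σ (P ×ˢ Q) := by
      intro P hP
      rw [Finset.sum_comm]
      apply Finset.sum_congr rfl
      intro Q hQ
      rw [← Finset.sum_filter, Finset.sum_const, nsmul_eq_mul]
      by_cases hpq : P = Q
      · subst hpq
        rw [hPP P hP, mul_zero, mul_zero]
      · rw [count_powerset hP hQ hpq]
        norm_cast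
    rw [Finset.sum_congr rfl swap2]
    have : ∑ P ∈ 𝒜, ∑ Q ∈ 𝒜, 2 ^ (𝒜.card - 2) * σ (P ×ˢ Q)
        = 2 ^ (𝒜.card - 2) * ∑ P ∈ 𝒜, ∑ Q ∈ 𝒜, σ (P ×ˢ Q) := by
      rw [Finset.mul_sum]
      exact Finset.sum_congr rfl fun P _ => (Finset.mul_sum _ _ _).symm
    rw [this, htotal, mul_one]
  -- Now bound the sum from above using hcon.
  have h𝒜ne : 𝒜 ≠ ∅ := by
    intro h
    rw [h] at hk2
    simp at hk2
  have hemptym : (∅ : Finset (Set X)) ∈ 𝒜.powerset := Finset.empty_mem_powerset _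
  have h𝒜mem : 𝒜 ∈ (𝒜.powerset.erase ∅) :=
    Finset.mem_erase.2 ⟨h𝒜ne, Finset.mem_powerset_self _⟩
  set S' := (𝒜.powerset.erase ∅).erase 𝒜 with hS'def
  have hsub : S' ⊆ 𝒜.powerset := (Finset.erase_subset _ _).trans (Finset.erase_subset _ _)
  have hzero' : ∀ T ∈ 𝒜.powerset, T ∉ S' → σ ((⋃ P ∈ T, P) ×ˢ (⋃ P ∈ T, P)ᶜ) = 0 := by
    intro T hTp hTn
    simp only [hS'def, Finset.mem_erase, not_and_or, not_not] at hTn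
    rcases hTn with rfl | hTn
    · rw [hU𝒜, Set.compl_univ, Set.prod_empty, measure_empty]
    · rcases hTn with rfl | hTn
      · simp
      · exact absurd hTp hTn
  have heq : ∑ T ∈ 𝒜.powerset, σ ((⋃ P ∈ T, P) ×ˢ (⋃ P ∈ T, P)ᶜ)
      = ∑ T ∈ S', σ ((⋃ P ∈ T, P) ×ˢ (⋃ P ∈ T, P)ᶜ) :=
    (Finset.sum_subset hsub hzero').symm
  have hcard : S'.card = 2 ^ 𝒜.card - 2 := by
    rw [hS'def, Finset.card_erase_of_mem h𝒜mem, Finset.card_erase_of_mem hemptym,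
      Finset.card_powerset]
    omega
  have hbound : ∑ T ∈ S', σ ((⋃ P ∈ T, P) ×ˢ (⋃ P ∈ T, P)ᶜ)
      ≤ S'.card • (1 / 4 : ENNReal) :=
    Finset.sum_le_card_nsmul _ _ _ (fun T _ => hcon _)
  rw [heq] at hsum
  rw [hsum, hcard, nsmul_eq_mul] at hbound
  -- hbound : 2 ^ (𝒜.card - 2) ≤ ↑(2 ^ 𝒜.card - 2) * (1 / 4)
  have h4 : (2 : ENNReal) ^ 𝒜.card ≤ ((2 ^ 𝒜.card - 2 : ℕ) : ENNReal) := by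
    calc (2 : ENNReal) ^ 𝒜.card = 2 ^ (𝒜.card - 2) * 4 := by
          have : 𝒜.card - 2 + 2 = 𝒜.card := by omega
          rw [← this, pow_add]
          norm_num
      _ ≤ (((2 ^ 𝒜.card - 2 : ℕ) : ENNReal) * (1 / 4)) * 4 :=
          mul_le_mul_left hbound 4
      _ = ((2 ^ 𝒜.card - 2 : ℕ) : ENNReal) * ((1 / 4) * 4) := mul_assoc _ _ _
      _ = ((2 ^ 𝒜.card - 2 : ℕ) : ENNReal) := by
          rw [one_div, ENNReal.inv_mul_cancel (by norm_num) (by norm_num), mul_one]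
  have h5 : (2 : ℕ) ^ 𝒜.card ≤ 2 ^ 𝒜.card - 2 := by exact_mod_cast h4
  have h6 : 2 ≤ 2 ^ 𝒜.card := by
    calc 2 = 2 ^ 1 := (pow_one 2).symm
    _ ≤ 2 ^ 𝒜.card := Nat.pow_le_pow_right (by norm_num) (by omega)
  omega
end

section
/- Let (X,d) be a separable metric space and σ a Borel probability measure on X × X with σ({(x,x) : x ∈ X}) = 0. Then there exists a Borel set E ⊆ X such that σ(E × (X \ E)) > 1/5. -/
open MeasureTheory Filter
open scoped ENNReal NNReal

lemma count_aux_stmt1 (n : ℕ) {i j : Fin n} (h : i ≠ j) :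
    (Finset.univ.filter fun S : Finset (Fin n) => i ∈ S ∧ j ∉ S).card = 2 ^ (n - 2) := by
  have hcard : (((Finset.univ : Finset (Fin n)).erase i).erase j).card = n - 2 := by
    rw [Finset.card_erase_of_mem (by simp [h.symm]), Finset.card_erase_of_mem (by simp)]
    simp [Finset.card_univ]
    omega
  have key : (Finset.univ.filter fun S : Finset (Fin n) => i ∈ S ∧ j ∉ S).card
      = ((((Finset.univ : Finset (Fin n)).erase i).erase j).powerset).card := by
    refine Finset.card_bij' (fun S _ => S.erase i) (fun T _ => insert i T) ?hi ?hj ?left ?right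
    case hi =>
      intro S hS
      simp only [Finset.mem_filter] at hS
      simp only [Finset.mem_powerset]
      intro x hx
      simp only [Finset.mem_erase] at hx ⊢
      exact ⟨fun hxj => hS.2.2 (hxj ▸ hx.2), hx.1, Finset.mem_univ x⟩
    case hj =>
      intro T hT
      simp only [Finset.mem_powerset] at hT
      simp only [Finset.mem_filter, Finset.mem_univ, true_and]
      refine ⟨Finset.mem_insert_self i T, fun hj => ?_⟩
      rcases Finset.mem_insert.1 hj with h1 | h1
      · exact h h1.symm
      · have := hT h1; simp at this
    case left =>
      intro S hS
      simp only [Finset.mem_filter] at hS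
      exact Finset.insert_erase hS.2.1
    case right =>
      intro T hT
      simp only [Finset.mem_powerset] at hT
      apply Finset.erase_insert
      intro hi
      have := hT hi
      simp at this
  rw [key, Finset.card_powerset, hcard]

lemma enn_arith1 : (4/5 : ℝ≥0∞) + 1/12 < 11/12 := by
  rw [show (4/5 : ℝ≥0∞) = ((4/5:ℝ≥0):ℝ≥0∞) by rw [ENNReal.coe_div (by norm_num)]; norm_num,
     show (1/12 : ℝ≥0∞) = ((1/12:ℝ≥0):ℝ≥0∞) by rw [ENNReal.coe_div (by norm_num)]; norm_num,
     show (11/12 : ℝ≥0∞) = ((11/12:ℝ≥0):ℝ≥0∞) by rw [ENNReal.coe_div (by norm_num)]; norm_num,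
     ← ENNReal.coe_add, ENNReal.coe_lt_coe]
  rw [div_add_div _ _ (by norm_num) (by norm_num), div_lt_div_iff₀ (by norm_num) (by norm_num)]
  norm_num

lemma enn_arith2 : (11/12 : ℝ≥0∞) < 1 := by
  rw [show (11/12 : ℝ≥0∞) = ((11/12:ℝ≥0):ℝ≥0∞) by rw [ENNReal.coe_div (by norm_num)]; norm_num]
  exact_mod_cast ENNReal.coe_lt_coe.2 (show (11/12 : ℝ≥0) < 1 by
    rw [div_lt_one (by norm_num)]; norm_num)

lemma enn_arith3 (N : ℕ) (h : 2 ≤ N) :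
    ((2^N : ℕ) : ℝ≥0∞) * (1/5) = ((2^(N-2) : ℕ) : ℝ≥0∞) * (4/5) := by
  obtain ⟨k, rfl⟩ : ∃ k, N = k + 2 := ⟨N - 2, by omega⟩
  push_cast
  rw [pow_add, mul_assoc]
  congr 1
  rw [show ((2:ℝ≥0∞)^2 = 4) by norm_num, ← mul_div_assoc, mul_one]

theorem stmt1 {X : Type*} [MetricSpace X] [TopologicalSpace.SeparableSpace X]
    [MeasurableSpace X] [BorelSpace X]
    (σ : Measure (X × X)) [IsProbabilityMeasure σ]
    (hdiag : σ {p : X × X | p.1 = p.2} = 0) :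
    ∃ E : Set X, MeasurableSet E ∧ σ (E ×ˢ Eᶜ) > 1 / 5 := by
  -- X is nonempty
  rcases isEmpty_or_nonempty X with hX | hX
  · exfalso
    have h1 : σ Set.univ = 1 := measure_univ
    rw [Set.univ_eq_empty_iff.2 (by infer_instance)] at h1
    simp at h1
  classical
  haveI : SecondCountableTopology X := UniformSpace.secondCountable_of_separable X
  -- Step 1: find ε > 0 with σ {dist < ε} < 1/12
  obtain ⟨u, hu⟩ := TopologicalSpace.exists_dense_seq X
  have hdistC : Continuous fun p : X × X => dist p.1 p.2 := by fun_prop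
  have hs_meas : ∀ c : ℝ, MeasurableSet {p : X × X | dist p.1 p.2 < c} := fun c =>
    (isOpen_lt hdistC continuous_const).measurableSet
  have hiInter : ⋂ n : ℕ, {p : X × X | dist p.1 p.2 < 1 / (n + 1)} = {p : X × X | p.1 = p.2} := by
    ext p
    simp only [Set.mem_iInter, Set.mem_setOf_eq]
    constructor
    · intro hp
      by_contra hne
      obtain ⟨n, hn⟩ := exists_nat_one_div_lt (dist_pos.2 hne)
      exact absurd (hp n) (not_lt.2 hn.le)
    · intro hp n
      rw [hp, dist_self]
      positivity
  have htend : Tendsto (fun n : ℕ => σ {p : X × X | dist p.1 p.2 < 1 / (n + 1)})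
      atTop (nhds 0) := by
    have := tendsto_measure_iInter_atTop (μ := σ)
      (s := fun n : ℕ => {p : X × X | dist p.1 p.2 < 1 / (n + 1)})
      (fun n => (hs_meas _).nullMeasurableSet)
      (fun n m hnm p hp => by
        simp only [Set.mem_setOf_eq] at hp ⊢
        refine lt_of_lt_of_le hp
          (one_div_le_one_div_of_le (by positivity) (by exact_mod_cast Nat.succ_le_succ hnm)))
      ⟨0, measure_ne_top σ _⟩
    rwa [hiInter, hdiag] at this
  have h112 : (0:ℝ≥0∞) < 1/12 := by norm_num
  obtain ⟨n₀, hn₀⟩ := (htend.eventually_lt_const h112).exists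
  set ε : ℝ := 1 / (n₀ + 1) with hεdef
  have hε : 0 < ε := by positivity
  set G : Set (X × X) := {p : X × X | ε ≤ dist p.1 p.2} with hGdef
  have hG_meas : MeasurableSet G := by
    have hGe : G = {p : X × X | dist p.1 p.2 < ε}ᶜ := by
      ext p; simp [hGdef, not_lt]
    rw [hGe]; exact (hs_meas ε).compl
  have hGc : σ Gᶜ < 1/12 := by
    have hGce : Gᶜ = {p : X × X | dist p.1 p.2 < ε} := by
      ext p; simp [hGdef, not_le]
    rw [hGce]; exact hn₀
  -- Step 2: cells of diameter < ε
  set A : ℕ → Set X := fun i => Metric.ball (u i) (ε/2) \ ⋃ j < i, Metric.ball (u j) (ε/2)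
    with hAdef
  have hA_meas : ∀ i, MeasurableSet (A i) := fun i =>
    Metric.isOpen_ball.measurableSet.diff
      (MeasurableSet.biUnion (Set.to_countable _) fun j _ => Metric.isOpen_ball.measurableSet)
  have hA_disj : ∀ i j : ℕ, i ≠ j → Disjoint (A i) (A j) := by
    intro i j hij
    rcases hij.lt_or_gt with h | h
    · exact Set.disjoint_left.2 fun x hxi hxj => hxj.2 (Set.mem_biUnion h hxi.1)
    · exact Set.disjoint_left.2 fun x hxi hxj => hxi.2 (Set.mem_biUnion h hxj.1)
  have hA_cover : ∀ x : X, ∃ i, x ∈ A i := by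
    intro x
    have hex : ∃ i, x ∈ Metric.ball (u i) (ε/2) := by
      obtain ⟨i, hi⟩ := Metric.denseRange_iff.1 hu x (ε/2) (by positivity)
      exact ⟨i, by simpa [Metric.mem_ball, dist_comm] using hi⟩
    refine ⟨Nat.find hex, Nat.find_spec hex, ?_⟩
    intro hmem
    simp only [Set.mem_iUnion] at hmem
    obtain ⟨j, hj, hxj⟩ := hmem
    exact Nat.find_min hex hj hxj
  have hA_diam : ∀ (i : ℕ) (x y : X), x ∈ A i → y ∈ A i → dist x y < ε := by
    intro i x y hx hy
    calc dist x y ≤ dist x (u i) + dist (u i) y := dist_triangle _ _ _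
      _ < ε/2 + ε/2 := add_lt_add (Metric.mem_ball.1 hx.1) (Metric.mem_ball'.1 hy.1)
      _ = ε := by ring
  -- Step 3: choose N with σ((F N) ×ˢ (F N)) > 11/12, N ≥ 2
  set F : ℕ → Set X := fun N => ⋃ i < N, A i with hFdef
  have hT_mono : Monotone fun N => (F N) ×ˢ (F N) := by
    intro a b hab
    have hF : F a ⊆ F b := Set.biUnion_subset_biUnion_left fun i hi => lt_of_lt_of_le hi hab
    exact Set.prod_mono hF hF
  have hT_union : ⋃ N, (F N) ×ˢ (F N) = Set.univ := by
    ext p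
    simp only [Set.mem_iUnion, Set.mem_univ, iff_true]
    obtain ⟨i, hi⟩ := hA_cover p.1
    obtain ⟨j, hj⟩ := hA_cover p.2
    exact ⟨max i j + 1, Set.mem_biUnion (Nat.lt_succ_of_le (le_max_left _ _)) hi,
      Set.mem_biUnion (Nat.lt_succ_of_le (le_max_right _ _)) hj⟩
  have htend2 : Tendsto (fun N => σ ((F N) ×ˢ (F N))) atTop (nhds 1) := by
    have := tendsto_measure_iUnion_atTop (μ := σ) hT_mono
    rwa [hT_union, measure_univ] at this
  obtain ⟨N₀, hN₀⟩ := (htend2.eventually_const_lt enn_arith2).exists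
  set N : ℕ := N₀ + 2 with hNdef
  have hN2 : 2 ≤ N := by omega
  have hTN : (11/12 : ℝ≥0∞) < σ ((F N) ×ˢ (F N)) :=
    lt_of_lt_of_le hN₀ (measure_mono (hT_mono (by omega)))
  -- m := σ (G ∩ F N ×ˢ F N) > 4/5
  set m : ℝ≥0∞ := σ (G ∩ (F N) ×ˢ (F N)) with hmdef
  have hm : (4/5 : ℝ≥0∞) < m := by
    by_contra hm'
    push_neg at hm'
    have hsplit : σ ((F N) ×ˢ (F N)) ≤ m + σ Gᶜ := by
      calc σ ((F N) ×ˢ (F N)) = σ ((G ∩ (F N) ×ˢ (F N)) ∪ (Gᶜ ∩ (F N) ×ˢ (F N))) := by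
            rw [← Set.union_inter_distrib_right, Set.union_compl_self, Set.univ_inter]
        _ ≤ m + σ (Gᶜ ∩ (F N) ×ˢ (F N)) := measure_union_le _ _
        _ ≤ m + σ Gᶜ := by gcongr; exact Set.inter_subset_left
    have hlt : σ ((F N) ×ˢ (F N)) < 11/12 :=
      lt_of_le_of_lt hsplit (lt_of_le_of_lt (add_le_add hm' hGc.le) enn_arith1)
    exact absurd hTN (not_lt.2 hlt.le)
  -- Step 4: combinatorics
  set w : Fin N → Fin N → ℝ≥0∞ := fun i j => σ (G ∩ ((A i) ×ˢ (A j))) with hwdef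
  have hw_diag : ∀ i : Fin N, w i i = 0 := by
    intro i
    have hempty : G ∩ ((A (i:ℕ)) ×ˢ (A (i:ℕ))) = ∅ := by
      rw [Set.eq_empty_iff_forall_notMem]
      rintro p ⟨hpG, hp⟩
      rw [Set.mem_prod] at hp
      exact absurd (hA_diam i p.1 p.2 hp.1 hp.2) (not_lt.2 hpG)
    simp [hwdef, hempty]
  have hsum_w : m ≤ ∑ p : Fin N × Fin N, w p.1 p.2 := by
    have hsub : G ∩ (F N) ×ˢ (F N) ⊆ ⋃ p : Fin N × Fin N, G ∩ ((A p.1) ×ˢ (A p.2)) := by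
      rintro p ⟨hpG, hp1, hp2⟩
      simp only [hFdef, Set.mem_iUnion] at hp1 hp2
      obtain ⟨i, hi, hpi⟩ := hp1
      obtain ⟨j, hj, hpj⟩ := hp2
      exact Set.mem_iUnion.2 ⟨(⟨i, hi⟩, ⟨j, hj⟩), hpG, hpi, hpj⟩
    calc m ≤ σ (⋃ p : Fin N × Fin N, G ∩ ((A p.1) ×ˢ (A p.2))) := measure_mono hsub
      _ ≤ ∑ p : Fin N × Fin N, w p.1 p.2 := measure_iUnion_fintype_le _ _
  -- E S and its measure bound
  set E : Finset (Fin N) → Set X := fun S => ⋃ i ∈ S, A (i : ℕ) with hEdef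
  have hE_meas : ∀ S, MeasurableSet (E S) := fun S =>
    S.measurableSet_biUnion fun i _ => hA_meas i
  have hlow : ∀ S : Finset (Fin N),
      ∑ p ∈ S ×ˢ Sᶜ, w p.1 p.2 ≤ σ ((E S) ×ˢ (E S)ᶜ) := by
    intro S
    have hdisj : ((S ×ˢ Sᶜ : Finset (Fin N × Fin N)) : Set (Fin N × Fin N)).PairwiseDisjoint
        (fun p : Fin N × Fin N => G ∩ ((A p.1) ×ˢ (A p.2))) := by
      intro p hp q hq hpq
      refine Set.disjoint_left.2 fun r hr1 hr2 => ?_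
      have h1 : p.1 = q.1 := by
        by_contra hne
        exact Set.disjoint_left.1
          (hA_disj _ _ fun hv => hne (Fin.val_injective hv)) hr1.2.1 hr2.2.1
      have h2 : p.2 = q.2 := by
        by_contra hne
        exact Set.disjoint_left.1
          (hA_disj _ _ fun hv => hne (Fin.val_injective hv)) hr1.2.2 hr2.2.2
      exact hpq (Prod.ext h1 h2)
    have hmeas : ∀ p ∈ S ×ˢ Sᶜ, MeasurableSet (G ∩ ((A (p.1:ℕ)) ×ˢ (A (p.2:ℕ)))) :=
      fun p _ => hG_meas.inter ((hA_meas _).prod (hA_meas _))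
    have heq := measure_biUnion_finset (μ := σ) hdisj hmeas
    rw [hwdef]
    simp only []
    rw [← heq]
    apply measure_mono
    intro r hr
    simp only [Set.mem_iUnion] at hr
    obtain ⟨p, hpS, hrG, hr1, hr2⟩ := hr
    rw [Finset.mem_product, Finset.mem_compl] at hpS
    constructor
    · exact Set.mem_biUnion hpS.1 hr1
    · intro hmem
      simp only [hEdef, Set.mem_iUnion] at hmem
      obtain ⟨i, hiS, hri⟩ := hmem
      have : i ≠ p.2 := fun h => hpS.2 (h ▸ hiS)
      exact Set.disjoint_left.1
        (hA_disj _ _ fun hv => this (Fin.val_injective hv)) hri hr2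
  -- total sum identity
  have hswap : ∑ S : Finset (Fin N), ∑ p ∈ S ×ˢ Sᶜ, w p.1 p.2
      = (2^(N-2) : ℕ) • ∑ p : Fin N × Fin N, w p.1 p.2 := by
    have h1 : ∀ S : Finset (Fin N), ∑ p ∈ S ×ˢ Sᶜ, w p.1 p.2
        = ∑ p : Fin N × Fin N, if p.1 ∈ S ∧ p.2 ∉ S then w p.1 p.2 else 0 := by
      intro S
      rw [← Finset.sum_filter]
      apply Finset.sum_congr _ (fun _ _ => rfl)
      ext p
      simp [Finset.mem_product]
    simp_rw [h1]
    rw [Finset.sum_comm, Finset.smul_sum]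
    refine Finset.sum_congr rfl fun p _ => ?_
    by_cases hp : p.1 = p.2
    · have hw0 : w p.1 p.2 = 0 := by rw [hp]; exact hw_diag p.2
      simp [hw0]
    · rw [← Finset.sum_filter, Finset.sum_const, count_aux_stmt1 N hp]
  -- conclusion
  by_contra hcon
  push_neg at hcon
  have hub : ∀ S : Finset (Fin N), σ ((E S) ×ˢ (E S)ᶜ) ≤ 1/5 := fun S =>
    hcon (E S) (hE_meas S)
  have htot_ub : ∑ S : Finset (Fin N), σ ((E S) ×ˢ (E S)ᶜ) ≤ (2^N : ℕ) • (1/5 : ℝ≥0∞) := by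
    calc ∑ S : Finset (Fin N), σ ((E S) ×ˢ (E S)ᶜ)
        ≤ ∑ _S : Finset (Fin N), (1/5:ℝ≥0∞) := Finset.sum_le_sum fun S _ => hub S
      _ = (Finset.univ : Finset (Finset (Fin N))).card • (1/5:ℝ≥0∞) := Finset.sum_const _
      _ = (2^N : ℕ) • (1/5:ℝ≥0∞) := by
          rw [Finset.card_univ, Fintype.card_finset, Fintype.card_fin]
  have htot_lb : (2^(N-2) : ℕ) • m ≤ ∑ S : Finset (Fin N), σ ((E S) ×ˢ (E S)ᶜ) := by
    calc (2^(N-2) : ℕ) • m ≤ (2^(N-2) : ℕ) • ∑ p : Fin N × Fin N, w p.1 p.2 := by gcongr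
      _ = ∑ S : Finset (Fin N), ∑ p ∈ S ×ˢ Sᶜ, w p.1 p.2 := hswap.symm
      _ ≤ ∑ S : Finset (Fin N), σ ((E S) ×ˢ (E S)ᶜ) := Finset.sum_le_sum fun S _ => hlow S
  have hstrict : ((2^(N-2) : ℕ) : ℝ≥0∞) * (4/5) < ((2^(N-2) : ℕ) : ℝ≥0∞) * m := by
    rw [ENNReal.mul_lt_mul_iff_right (by positivity) (ENNReal.natCast_ne_top _)]
    exact hm
  have hfinal : ((2^(N-2) : ℕ) : ℝ≥0∞) * m ≤ ((2^(N-2) : ℕ) : ℝ≥0∞) * (4/5) := by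
    calc ((2^(N-2) : ℕ) : ℝ≥0∞) * m = (2^(N-2) : ℕ) • m := (nsmul_eq_mul _ _).symm
      _ ≤ (2^N : ℕ) • (1/5 : ℝ≥0∞) := htot_lb.trans htot_ub
      _ = ((2^N : ℕ) : ℝ≥0∞) * (1/5) := nsmul_eq_mul _ _
      _ = ((2^(N-2) : ℕ) : ℝ≥0∞) * (4/5) := enn_arith3 N hN2
  exact absurd hstrict (not_lt.2 hfinal)
end

section
/- Let (X,d) be a geodesic metric space, t ∈ (0,1), and let γ¹, γ² be constant-speed geodesics in X with γ¹_t = γ²_t and d(γ¹_0, γ¹_1) = d(γ²_0, γ²_1). Suppose d²(γ¹_0, γ¹_1) + d²(γ²_0, γ²_1) ≤ d²(γ¹_0, γ²_1) + d²(γ²_0, γ¹_1). Then the curve γ defined by γ|_{[0,t]} = γ¹|_{[0,t]} and γ|_{[t,1]} = γ²|_{[t,1]} is a constant-speed geodesic from γ¹_0 to γ²_1. -/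
def IsGeodesic {X : Type*} [MetricSpace X] (γ : ℝ → X) : Prop :=
  ∀ a ∈ Set.Icc (0:ℝ) 1, ∀ b ∈ Set.Icc (0:ℝ) 1,
    dist (γ a) (γ b) = |a - b| * dist (γ 0) (γ 1)

theorem stmt6 {X : Type*} [MetricSpace X]
    (γ1 γ2 : ℝ → X) (h1 : IsGeodesic γ1) (h2 : IsGeodesic γ2)
    (t : ℝ) (ht : t ∈ Set.Ioo (0:ℝ) 1)
    (heq : γ1 t = γ2 t)
    (hlen : dist (γ1 0) (γ1 1) = dist (γ2 0) (γ2 1))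
    (hcm : dist (γ1 0) (γ1 1) ^ 2 + dist (γ2 0) (γ2 1) ^ 2 ≤
      dist (γ1 0) (γ2 1) ^ 2 + dist (γ2 0) (γ1 1) ^ 2) :
    IsGeodesic (fun x => if x ≤ t then γ1 x else γ2 x) ∧
    (fun x => if x ≤ t then γ1 x else γ2 x) 0 = γ1 0 ∧
    (fun x => if x ≤ t then γ1 x else γ2 x) 1 = γ2 1 := by
  obtain ⟨ht0, ht1⟩ := ht
  have htI : t ∈ Set.Icc (0:ℝ) 1 := ⟨ht0.le, ht1.le⟩
  have h0I : (0:ℝ) ∈ Set.Icc (0:ℝ) 1 := ⟨le_refl _, zero_le_one⟩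
  have h1I : (1:ℝ) ∈ Set.Icc (0:ℝ) 1 := ⟨zero_le_one, le_refl _⟩
  set L := dist (γ1 0) (γ1 1) with hL
  have hLnn : 0 ≤ L := dist_nonneg
  -- distances to/from t
  have d1t : ∀ a ∈ Set.Icc (0:ℝ) 1, dist (γ1 a) (γ1 t) = |a - t| * L :=
    fun a ha => h1 a ha t htI
  have d2t : ∀ b ∈ Set.Icc (0:ℝ) 1, dist (γ2 t) (γ2 b) = |t - b| * L := by
    intro b hb
    rw [h2 t htI b hb, ← hlen]
  have hA : dist (γ1 0) (γ2 1) ≤ L := by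
    calc dist (γ1 0) (γ2 1) ≤ dist (γ1 0) (γ1 t) + dist (γ1 t) (γ2 1) := dist_triangle _ _ _
      _ = |0 - t| * L + |t - 1| * L := by rw [d1t 0 h0I, heq, d2t 1 h1I]
      _ = L := by
          rw [abs_of_nonpos (by linarith), abs_of_nonpos (by linarith)]; ring
  have hB : dist (γ2 0) (γ1 1) ≤ L := by
    calc dist (γ2 0) (γ1 1) ≤ dist (γ2 0) (γ2 t) + dist (γ2 t) (γ1 1) := dist_triangle _ _ _
      _ = |0 - t| * L + |1 - t| * L := by
          rw [dist_comm (γ2 0), d2t 0 h0I, ← heq, dist_comm, d1t 1 h1I, abs_sub_comm t 0]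
      _ = L := by
          rw [abs_of_nonpos (by linarith), abs_of_nonneg (by linarith)]; ring
  have hAeq : dist (γ1 0) (γ2 1) = L := by
    nlinarith [dist_nonneg (x := γ1 0) (y := γ2 1), dist_nonneg (x := γ2 0) (y := γ1 1),
      sq_nonneg (dist (γ1 0) (γ2 1) - L), sq_nonneg (dist (γ2 0) (γ1 1) - L)]
  -- mixed-case distance
  have hmix : ∀ a ∈ Set.Icc (0:ℝ) 1, ∀ b ∈ Set.Icc (0:ℝ) 1, a ≤ t → ¬ b ≤ t →
      dist (γ1 a) (γ2 b) = (b - a) * L := by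
    intro a ha b hb hat hbt
    push_neg at hbt
    have hub : dist (γ1 a) (γ2 b) ≤ (b - a) * L := by
      calc dist (γ1 a) (γ2 b) ≤ dist (γ1 a) (γ1 t) + dist (γ1 t) (γ2 b) := dist_triangle _ _ _
        _ = |a - t| * L + |t - b| * L := by rw [d1t a ha, heq, d2t b hb]
        _ = (b - a) * L := by
            rw [abs_of_nonpos (by linarith), abs_of_nonpos (by linarith)]; ring
    have hlb : L ≤ dist (γ1 0) (γ1 a) + dist (γ1 a) (γ2 b) + dist (γ2 b) (γ2 1) := by
      calc L = dist (γ1 0) (γ2 1) := hAeq.symm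
        _ ≤ dist (γ1 0) (γ1 a) + dist (γ1 a) (γ2 1) := dist_triangle _ _ _
        _ ≤ dist (γ1 0) (γ1 a) + (dist (γ1 a) (γ2 b) + dist (γ2 b) (γ2 1)) := by
            gcongr; exact dist_triangle _ _ _
        _ = _ := by ring
    have e1 : dist (γ1 0) (γ1 a) = a * L := by
      rw [h1 0 h0I a ha, abs_of_nonpos (by linarith [ha.1])]; ring_nf; rfl
    have e2 : dist (γ2 b) (γ2 1) = (1 - b) * L := by
      rw [h2 b hb 1 h1I, ← hlen, abs_of_nonpos (by linarith [hb.2])]; ring_nf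
    rw [e1, e2] at hlb
    linarith
  have g0 : (fun x => if x ≤ t then γ1 x else γ2 x) 0 = γ1 0 := by
    simp only [if_pos ht0.le]
  have g1 : (fun x => if x ≤ t then γ1 x else γ2 x) 1 = γ2 1 := by
    simp only [if_neg (not_le.mpr ht1)]
  refine ⟨?_, g0, g1⟩
  intro a ha b hb
  simp only [g0, g1]
  by_cases hat : a ≤ t <;> by_cases hbt : b ≤ t <;>
    simp only [if_pos, if_neg, hat, hbt, ite_true, ite_false, if_true, if_false] <;>
    rw [hAeq]
  · exact h1 a ha b hb
  · rw [hmix a ha b hb hat hbt]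
    rw [abs_of_nonpos (by push_neg at hbt; linarith)]; ring
  · rw [dist_comm, hmix b hb a ha hbt hat, abs_of_nonneg (by push_neg at hat; linarith)]
  · rw [h2 a ha b hb, hlen]
end

section
/- Let (X,d) be a metric space, t ∈ (0,1), and let γ¹, γ² be constant-speed geodesics with γ¹_t = γ²_t. If d²(γ¹_0, γ¹_1) + d²(γ²_0, γ²_1) ≤ d²(γ¹_0, γ²_1) + d²(γ²_0, γ¹_1), then l(γ¹) = l(γ²), where l(γ) = d(γ_0, γ_1). -/
theorem stmt7 {X : Type*} [MetricSpace X]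
    (γ1 γ2 : ℝ → X) (h1 : IsGeodesic γ1) (h2 : IsGeodesic γ2)
    (t : ℝ) (ht : t ∈ Set.Ioo (0:ℝ) 1)
    (heq : γ1 t = γ2 t)
    (hcm : dist (γ1 0) (γ1 1) ^ 2 + dist (γ2 0) (γ2 1) ^ 2 ≤
      dist (γ1 0) (γ2 1) ^ 2 + dist (γ2 0) (γ1 1) ^ 2) :
    dist (γ1 0) (γ1 1) = dist (γ2 0) (γ2 1) := by
  obtain ⟨ht0, ht1⟩ := ht
  have htI : t ∈ Set.Icc (0:ℝ) 1 := ⟨ht0.le, ht1.le⟩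
  have h0 : (0:ℝ) ∈ Set.Icc (0:ℝ) 1 := ⟨le_refl 0, zero_le_one⟩
  have hI1 : (1:ℝ) ∈ Set.Icc (0:ℝ) 1 := ⟨zero_le_one, le_refl 1⟩
  set l1 := dist (γ1 0) (γ1 1) with hl1
  set l2 := dist (γ2 0) (γ2 1) with hl2
  have e1 : dist (γ1 0) (γ1 t) = t * l1 := by
    have := h1 0 h0 t htI; simpa [abs_of_nonpos (by linarith : (0:ℝ) - t ≤ 0), abs_of_pos ht0] using this
  have e2 : dist (γ1 t) (γ1 1) = (1 - t) * l1 := by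
    have := h1 t htI 1 hI1; simpa [abs_of_nonpos (by linarith : t - 1 ≤ 0)] using this
  have e3 : dist (γ2 0) (γ2 t) = t * l2 := by
    have := h2 0 h0 t htI; simpa [abs_of_nonpos (by linarith : (0:ℝ) - t ≤ 0), abs_of_pos ht0] using this
  have e4 : dist (γ2 t) (γ2 1) = (1 - t) * l2 := by
    have := h2 t htI 1 hI1; simpa [abs_of_nonpos (by linarith : t - 1 ≤ 0)] using this
  have b1 : dist (γ1 0) (γ2 1) ≤ t * l1 + (1 - t) * l2 := by
    calc dist (γ1 0) (γ2 1) ≤ dist (γ1 0) (γ1 t) + dist (γ1 t) (γ2 1) := dist_triangle _ _ _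
    _ = t * l1 + (1 - t) * l2 := by rw [e1, heq, e4]
  have b2 : dist (γ2 0) (γ1 1) ≤ t * l2 + (1 - t) * l1 := by
    calc dist (γ2 0) (γ1 1) ≤ dist (γ2 0) (γ2 t) + dist (γ2 t) (γ1 1) := dist_triangle _ _ _
    _ = t * l2 + (1 - t) * l1 := by rw [e3, ← heq, e2]
  have s1 : dist (γ1 0) (γ2 1) ^ 2 ≤ (t * l1 + (1 - t) * l2) ^ 2 := by
    have := dist_nonneg (x := γ1 0) (y := γ2 1)
    nlinarith
  have s2 : dist (γ2 0) (γ1 1) ^ 2 ≤ (t * l2 + (1 - t) * l1) ^ 2 := by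
    have := dist_nonneg (x := γ2 0) (y := γ1 1)
    nlinarith
  have key : 2 * t * (1 - t) * (l1 - l2) ^ 2 ≤ 0 := by nlinarith
  have : (l1 - l2) ^ 2 ≤ 0 := by
    have hpos : 0 < 2 * t * (1 - t) := by nlinarith
    nlinarith [sq_nonneg (l1 - l2)]
  have := sq_nonneg (l1 - l2)
  have : (l1 - l2) ^ 2 = 0 := le_antisymm ‹_› ‹_›
  have := pow_eq_zero_iff (n := 2) (by norm_num) |>.mp this
  linarith
end

section
/- Let (X,d) be a metric space, t ∈ (0,1), and γ¹, γ² constant-speed geodesics with γ¹_t = γ²_t. Then d²(γ¹_0, γ²_1) + d²(γ²_0, γ¹_1) ≤ d²(γ¹_0, γ¹_1) + d²(γ²_0, γ²_1) − 2t(1−t)(l(γ¹) − l(γ²))², where l(γ) = d(γ_0, γ_1). -/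
theorem stmt8 {X : Type*} [MetricSpace X]
    (γ1 γ2 : ℝ → X) (h1 : IsGeodesic γ1) (h2 : IsGeodesic γ2)
    (t : ℝ) (ht : t ∈ Set.Ioo (0:ℝ) 1)
    (heq : γ1 t = γ2 t) :
    dist (γ1 0) (γ2 1) ^ 2 + dist (γ2 0) (γ1 1) ^ 2 ≤
      dist (γ1 0) (γ1 1) ^ 2 + dist (γ2 0) (γ2 1) ^ 2 -
        2 * t * (1 - t) * (dist (γ1 0) (γ1 1) - dist (γ2 0) (γ2 1)) ^ 2 := by
  obtain ⟨ht0, ht1⟩ := ht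
  have htI : t ∈ Set.Icc (0:ℝ) 1 := ⟨ht0.le, ht1.le⟩
  have h0 : (0:ℝ) ∈ Set.Icc (0:ℝ) 1 := by constructor <;> norm_num
  have hone : (1:ℝ) ∈ Set.Icc (0:ℝ) 1 := by constructor <;> norm_num
  set a := dist (γ1 0) (γ1 1) with ha
  set b := dist (γ2 0) (γ2 1) with hb
  have ha0 : 0 ≤ a := dist_nonneg
  have hb0 : 0 ≤ b := dist_nonneg
  have e1 : dist (γ1 0) (γ1 t) = t * a := by
    rw [h1 0 h0 t htI]; rw [abs_of_nonpos (by linarith)]; ring_nf; rfl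
  have e2 : dist (γ2 t) (γ2 1) = (1 - t) * b := by
    rw [h2 t htI 1 hone]; rw [abs_of_nonpos (by linarith)]; ring_nf; rfl
  have e3 : dist (γ2 0) (γ2 t) = t * b := by
    rw [h2 0 h0 t htI]; rw [abs_of_nonpos (by linarith)]; ring_nf; rfl
  have e4 : dist (γ1 t) (γ1 1) = (1 - t) * a := by
    rw [h1 t htI 1 hone]; rw [abs_of_nonpos (by linarith)]; ring_nf; rfl
  have d1 : dist (γ1 0) (γ2 1) ≤ t * a + (1 - t) * b := by
    calc dist (γ1 0) (γ2 1) ≤ dist (γ1 0) (γ1 t) + dist (γ1 t) (γ2 1) := dist_triangle _ _ _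
    _ = t * a + (1 - t) * b := by rw [e1, heq, e2]
  have d2 : dist (γ2 0) (γ1 1) ≤ t * b + (1 - t) * a := by
    calc dist (γ2 0) (γ1 1) ≤ dist (γ2 0) (γ2 t) + dist (γ2 t) (γ1 1) := dist_triangle _ _ _
    _ = t * b + (1 - t) * a := by rw [e3, ← heq, e4]
  have s1 : dist (γ1 0) (γ2 1) ^ 2 ≤ (t * a + (1 - t) * b) ^ 2 :=
    pow_le_pow_left₀ dist_nonneg d1 2
  have s2 : dist (γ2 0) (γ1 1) ^ 2 ≤ (t * b + (1 - t) * a) ^ 2 :=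
    pow_le_pow_left₀ dist_nonneg d2 2
  nlinarith [s1, s2]
end

section
/- Let (X,d) be a complete separable metric space. The set B¹ of pairs (γ¹,γ²) of geodesics that agree on [0,T], are distinct, and for which {t ∈ [0,1] : γ¹_t ≠ γ²_t} is an interval, is a Borel subset of Geo(X) × Geo(X). -/
def IsGeodesicI {X : Type*} [MetricSpace X] (γ : C(unitInterval, X)) : Prop :=
  ∀ s t : unitInterval, dist (γ s) (γ t) = |(s : ℝ) - (t : ℝ)| * dist (γ 0) (γ 1)

theorem stmt15 {X : Type*} [MetricSpace X] [CompleteSpace X]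
    [SecondCountableTopology X] (T : ℝ) (hT : T ∈ Set.Ioo (0:ℝ) 1) :
    @MeasurableSet ({γ : C(unitInterval, X) // IsGeodesicI γ} ×
        {γ : C(unitInterval, X) // IsGeodesicI γ})
      (borel _)
      {p : {γ : C(unitInterval, X) // IsGeodesicI γ} ×
          {γ : C(unitInterval, X) // IsGeodesicI γ} |
        (∀ s : unitInterval, (s : ℝ) ≤ T → p.1.1 s = p.2.1 s) ∧
        p.1 ≠ p.2 ∧
        Set.OrdConnected {s : unitInterval | p.1.1 s ≠ p.2.1 s}} := by
  set G := {γ : C(unitInterval, X) // IsGeodesicI γ} with hGdef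
  letI : MeasurableSpace (G × G) := borel _
  haveI : BorelSpace (G × G) := ⟨rfl⟩
  -- evaluation maps are continuous
  have hev1 : ∀ s : unitInterval, Continuous fun p : G × G => p.1.1 s := fun s =>
    (continuous_eval_const s).comp (continuous_subtype_val.comp continuous_fst)
  have hev2 : ∀ s : unitInterval, Continuous fun p : G × G => p.2.1 s := fun s =>
    (continuous_eval_const s).comp (continuous_subtype_val.comp continuous_snd)
  -- the "agree up to T" set is closed
  set A : Set (G × G) :=
    {p | ∀ s : unitInterval, (s : ℝ) ≤ T → p.1.1 s = p.2.1 s} with hAdef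
  have hAclosed : IsClosed A := by
    have : A = ⋂ s : unitInterval, ⋂ _ : (s : ℝ) ≤ T, {p : G × G | p.1.1 s = p.2.1 s} := by
      ext p; simp [hAdef, Set.mem_iInter]
    rw [this]
    exact isClosed_iInter fun s => isClosed_iInter fun _ => isClosed_eq (hev1 s) (hev2 s)
  -- diagonal is closed
  have hDclosed : IsClosed {p : G × G | p.1 = p.2} :=
    isClosed_eq continuous_fst continuous_snd
  -- the pieces of the "bad" set
  set Z : ℚ → ℚ → Set (G × G) := fun q₁ q₂ =>
    {p | ∃ s : unitInterval, (q₁ : ℝ) ≤ (s : ℝ) ∧ (s : ℝ) ≤ q₂ ∧ p.1.1 s = p.2.1 s} with hZdef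
  set P₁ : ℚ → Set (G × G) := fun q =>
    {p | ∃ r : unitInterval, (r : ℝ) < q ∧ p.1.1 r ≠ p.2.1 r} with hP₁def
  set P₂ : ℚ → Set (G × G) := fun q =>
    {p | ∃ r : unitInterval, (q : ℝ) < (r : ℝ) ∧ p.1.1 r ≠ p.2.1 r} with hP₂def
  have hP₁open : ∀ q : ℚ, IsOpen (P₁ q) := by
    intro q
    have : P₁ q = ⋃ r : unitInterval, ⋃ _ : (r : ℝ) < q, {p : G × G | p.1.1 r = p.2.1 r}ᶜ := by
      ext p; simp [hP₁def, Set.mem_iUnion]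
    rw [this]
    exact isOpen_iUnion fun r => isOpen_iUnion fun _ =>
      (isClosed_eq (hev1 r) (hev2 r)).isOpen_compl
  have hP₂open : ∀ q : ℚ, IsOpen (P₂ q) := by
    intro q
    have : P₂ q = ⋃ r : unitInterval, ⋃ _ : (q : ℝ) < (r : ℝ),
        {p : G × G | p.1.1 r = p.2.1 r}ᶜ := by
      ext p; simp [hP₂def, Set.mem_iUnion]
    rw [this]
    exact isOpen_iUnion fun r => isOpen_iUnion fun _ =>
      (isClosed_eq (hev1 r) (hev2 r)).isOpen_compl
  -- Z is closed, by a sequential compactness argument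
  have hZclosed : ∀ q₁ q₂ : ℚ, IsClosed (Z q₁ q₂) := by
    intro q₁ q₂
    have hK : IsCompact {s : unitInterval | (q₁ : ℝ) ≤ (s : ℝ) ∧ (s : ℝ) ≤ q₂} := by
      apply IsClosed.isCompact
      exact (isClosed_le continuous_const continuous_subtype_val).inter
        (isClosed_le continuous_subtype_val continuous_const)
    apply IsSeqClosed.isClosed
    intro u p hu hup
    choose s hs1 hs2 hs3 using hu
    obtain ⟨s₀, hs₀K, φ, hφ, hconv⟩ := hK.tendsto_subseq (fun n => ⟨hs1 n, hs2 n⟩)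
    have hupφ : Filter.Tendsto (u ∘ φ) Filter.atTop (nhds p) :=
      hup.comp hφ.tendsto_atTop
    have h1t : Filter.Tendsto (fun n => (u (φ n)).1.1) Filter.atTop (nhds p.1.1) :=
      ((continuous_subtype_val.comp continuous_fst).tendsto p).comp hupφ
    have h2t : Filter.Tendsto (fun n => (u (φ n)).2.1) Filter.atTop (nhds p.2.1) :=
      ((continuous_subtype_val.comp continuous_snd).tendsto p).comp hupφ
    rw [ContinuousMap.tendsto_iff_tendstoUniformly] at h1t h2t
    have hA1 : Filter.Tendsto (fun n => (u (φ n)).1.1 (s (φ n))) Filter.atTop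
        (nhds (p.1.1 s₀)) :=
      h1t.tendsto_comp (p.1.1.continuous.continuousAt) hconv
    have hA2 : Filter.Tendsto (fun n => (u (φ n)).2.1 (s (φ n))) Filter.atTop
        (nhds (p.2.1 s₀)) :=
      h2t.tendsto_comp (p.2.1.continuous.continuousAt) hconv
    have hdist : Filter.Tendsto
        (fun n => dist ((u (φ n)).1.1 (s (φ n))) ((u (φ n)).2.1 (s (φ n)))) Filter.atTop
        (nhds (dist (p.1.1 s₀) (p.2.1 s₀))) := hA1.dist hA2
    have hzero : (fun n => dist ((u (φ n)).1.1 (s (φ n))) ((u (φ n)).2.1 (s (φ n))))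
        = fun _ => (0 : ℝ) := by
      funext n; rw [hs3 (φ n)]; exact dist_self _
    rw [hzero] at hdist
    have : dist (p.1.1 s₀) (p.2.1 s₀) = 0 :=
      (tendsto_nhds_unique tendsto_const_nhds hdist).symm
    exact ⟨s₀, hs₀K.1, hs₀K.2, dist_eq_zero.mp this⟩
  -- the bad set
  set N : Set (G × G) := ⋃ q : ℚ × ℚ, Z q.1 q.2 ∩ (P₁ q.1 ∩ P₂ q.2) with hNdef
  have hNmeas : MeasurableSet N :=
    MeasurableSet.iUnion fun q =>
      ((hZclosed q.1 q.2).measurableSet).inter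
        (((hP₁open q.1).measurableSet).inter ((hP₂open q.2).measurableSet))
  -- characterization of non-ord-connectedness
  have key : ∀ p : G × G,
      p ∈ N ↔ ¬ Set.OrdConnected {s : unitInterval | p.1.1 s ≠ p.2.1 s} := by
    intro p
    constructor
    · intro hp hoc
      simp only [hNdef, Set.mem_iUnion, Set.mem_inter_iff] at hp
      obtain ⟨⟨q₁, q₂⟩, ⟨z, hq₁z, hzq₂, hze⟩, ⟨x, hxq₁, hxne⟩, ⟨y, hq₂y, hyne⟩⟩ := hp
      have hxz : x ≤ z := Subtype.coe_le_coe.mp (le_of_lt (lt_of_lt_of_le hxq₁ hq₁z))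
      have hzy : z ≤ y := Subtype.coe_le_coe.mp (hzq₂.trans_lt hq₂y).le
      exact (hoc.out hxne hyne ⟨hxz, hzy⟩) hze
    · intro hoc
      rw [Set.ordConnected_iff] at hoc
      push_neg at hoc
      obtain ⟨x, hx, y, hy, hxy, hsub⟩ := hoc
      obtain ⟨z, hz, hzns⟩ := Set.not_subset.mp hsub
      have hze : p.1.1 z = p.2.1 z := not_not.mp hzns
      have hxz : (x : ℝ) < z := by
        rcases lt_or_eq_of_le (Subtype.coe_le_coe.mpr hz.1) with h | h
        · exact h
        · exact absurd hze (by rw [← Subtype.coe_injective h]; exact hx)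
      have hzy : (z : ℝ) < y := by
        rcases lt_or_eq_of_le (Subtype.coe_le_coe.mpr hz.2) with h | h
        · exact h
        · exact absurd hze (by rw [Subtype.coe_injective h]; exact hy)
      obtain ⟨q₁, hq₁l, hq₁r⟩ := exists_rat_btwn hxz
      obtain ⟨q₂, hq₂l, hq₂r⟩ := exists_rat_btwn hzy
      simp only [hNdef, Set.mem_iUnion, Set.mem_inter_iff]
      exact ⟨(q₁, q₂), ⟨z, hq₁r.le, hq₂l.le, hze⟩, ⟨x, hq₁l, hx⟩, ⟨y, hq₂r, hy⟩⟩
  -- final set identity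
  have hSet : {p : G × G |
        (∀ s : unitInterval, (s : ℝ) ≤ T → p.1.1 s = p.2.1 s) ∧
        p.1 ≠ p.2 ∧
        Set.OrdConnected {s : unitInterval | p.1.1 s ≠ p.2.1 s}} =
      A ∩ ({p : G × G | p.1 = p.2}ᶜ ∩ Nᶜ) := by
    ext p
    simp only [Set.mem_setOf_eq, Set.mem_inter_iff, Set.mem_compl_iff, key p, hAdef,
      Set.mem_setOf_eq, not_not]

  rw [hSet]
  exact hAclosed.measurableSet.inter
    ((hDclosed.measurableSet.compl).inter hNmeas.compl)
end
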